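/- Let y, ŷ, z, ẑ, Y, Ŷ, Z, Ẑ ∈ ℂ satisfy yŷ + zẑ = 1 and YŶ + ZẐ = 1, let E ∈ ℂ be nonzero, set ρ = yŶ + zẐ, κ = ŷẐ − ẑŶ, ρ̂ = ŷY + ẑZ, κ̂ = yZ − zY, and assume y, ŷ, ρ, ρ̂ are all nonzero. Define the jump matrices Q₁ = [[1, 0],[(Ẑ/(yρ))E, 1]], Q₂ = [[1, (κ̂/ρ̂)E⁻¹],[(κ/ρ)E, 1 + κκ̂/(ρρ̂)]], Q₃ = [[1, (Z/(ŷρ̂))E⁻¹],[0, 1]], Q₄ = [[1/(yŷ), (z/ŷ)E⁻¹],[(ẑ/y)E, 1]]. Then Q₄ is invertible and the factorization Q₂ = Q₁·Q₄⁻¹·Q₃ holds. -/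

import Mathlib

set_option maxHeartbeats 1000000


/-- factorization of the jump matrices of the Riemann–Hilbert problem for the
FODNLS equation.  With `y·yh + z·zh = 1`, `Y·Yh + Z·Zh = 1`, `E ≠ 0`,
`ρ = y·Yh + z·Zh`, `κ = yh·Zh − zh·Yh`, `ρh = yh·Y + zh·Z`, `κh = y·Z − z·Y`, and
`y, yh, ρ, ρh` all nonzero, the jump matrices
`Q₁ = [[1, 0],[(Zh/(y·ρ))E, 1]]`, `Q₂ = [[1, (κh/ρh)E⁻¹],[(κ/ρ)E, 1 + κ·κh/(ρ·ρh)]]`,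
`Q₃ = [[1, (Z/(yh·ρh))E⁻¹],[0, 1]]`, `Q₄ = [[1/(y·yh), (z/yh)E⁻¹],[(zh/y)E, 1]]`
satisfy: `Q₄` is invertible and `Q₂ = Q₁ · Q₄⁻¹ · Q₃`. -/
theorem stmt_10 (y yh z zh Y Yh Z Zh : ℂ)
    (hdet1 : y * yh + z * zh = 1) (hdet2 : Y * Yh + Z * Zh = 1)
    (E : ℂ) (hE : E ≠ 0)
    (ρ κ ρh κh : ℂ)
    (hρ : ρ = y * Yh + z * Zh) (hκ : κ = yh * Zh - zh * Yh)
    (hρh : ρh = yh * Y + zh * Z) (hκh : κh = y * Z - z * Y)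
    (hy : y ≠ 0) (hyh : yh ≠ 0) (hρ0 : ρ ≠ 0) (hρh0 : ρh ≠ 0)
    (Q₁ Q₂ Q₃ Q₄ : Matrix (Fin 2) (Fin 2) ℂ)
    (hQ₁ : Q₁ = !![1, 0; (Zh / (y * ρ)) * E, 1])
    (hQ₂ : Q₂ = !![1, (κh / ρh) * E⁻¹; (κ / ρ) * E, 1 + κ * κh / (ρ * ρh)])
    (hQ₃ : Q₃ = !![1, (Z / (yh * ρh)) * E⁻¹; 0, 1])
    (hQ₄ : Q₄ = !![1 / (y * yh), (z / yh) * E⁻¹; (zh / y) * E, 1]) :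
    IsUnit Q₄ ∧ Q₂ = Q₁ * Q₄⁻¹ * Q₃ := by
  have hEE : E * E⁻¹ = 1 := mul_inv_cancel₀ hE
  have hρ0' : y * Yh + z * Zh ≠ 0 := hρ ▸ hρ0
  have hρh0' : yh * Y + zh * Z ≠ 0 := hρh ▸ hρh0
  have key : 1 / (y * yh) - (zh / y) * (z / yh) = 1 := by
    field_simp
    linear_combination -hdet1
  have hQB : Q₄ * !![1, -((z / yh) * E⁻¹); -((zh / y) * E), 1 / (y * yh)] = 1 := by
    rw [hQ₄, Matrix.mul_fin_two]
    ext i j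
    fin_cases i <;> fin_cases j <;> simp [Matrix.one_apply]
    all_goals
      first
      | ring1
      | linear_combination key + (-(z / yh * (zh / y))) * hEE
      | linear_combination -key + (z / yh * (zh / y)) * hEE
      | linear_combination key + (z / yh * (zh / y)) * hEE
      | linear_combination -key + (-(z / yh * (zh / y))) * hEE
  have hBQ : (!![1, -((z / yh) * E⁻¹); -((zh / y) * E), 1 / (y * yh)]) * Q₄ = 1 :=
    mul_eq_one_comm.mp hQB
  have hunit : IsUnit Q₄ := ⟨⟨Q₄, _, hQB, hBQ⟩, rfl⟩
  have hinv : Q₄⁻¹ = !![1, -((z / yh) * E⁻¹); -((zh / y) * E), 1 / (y * yh)] :=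
    Matrix.inv_eq_right_inv hQB
  refine ⟨hunit, ?_⟩
  have e01 : Z / (yh * ρh) - z / yh = κh / ρh := by
    rw [hρh, hκh]
    rw [div_sub_div _ _ (mul_ne_zero hyh hρh0') hyh, div_eq_div_iff (mul_ne_zero (mul_ne_zero hyh hρh0') hyh) hρh0']
    linear_combination (-(Z * yh * (yh * Y + zh * Z))) * hdet1
  have e10 : Zh / (y * ρ) - zh / y = κ / ρ := by
    rw [hρ, hκ]
    rw [div_sub_div _ _ (mul_ne_zero hy hρ0') hy, div_eq_div_iff (mul_ne_zero (mul_ne_zero hy hρ0') hy) hρ0']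
    linear_combination (-(Zh * y * (y * Yh + z * Zh))) * hdet1
  rw [hQ₁, hQ₂, hQ₃, hinv, Matrix.mul_fin_two, Matrix.mul_fin_two]
  ext i j
  fin_cases i <;> fin_cases j <;> simp
  · first
    | linear_combination E⁻¹ * e01
    | linear_combination (-E⁻¹) * e01
  · first
    | linear_combination E * e10
    | linear_combination (-E) * e10
  · linear_combination (-1 : ℂ) * key + (-(κh / ρh)) * e10
      + (-(Zh / (y * ρ) - zh / y)) * e01
      + (-((Zh / (y * ρ)) * (Z / (yh * ρh)) - (Zh / (y * ρ)) * (z / yh)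
          - (zh / y) * (Z / (yh * ρh)))) * hEE
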